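/- Let G = (V, E) be a finite simple graph with m edges, let i ≥ 1, let α ≥ i + 1, and let w_i, w_{i+1} ≥ 0 (and arbitrary nonnegative w_j for other indices j ≥ 2, with w_0 = 0, w_1 = 1). Construct the hypergraph H whose vertex set is V together with new vertices s_1, …, s_α and t_1, …, t_α, and whose hyperedges are: all 2-element subsets of {s_1, …, s_α}, all 2-element subsets of {t_1, …, t_α}, and for each edge {x, y} ∈ E the hyperedge {s_1, …, s_i, x, y, t_1, …, t_i}. Then for every cut S* with {s_1, …, s_α} ⊆ S* and {t_1, …, t_α} disjoint from S*, the cardinality-based cost of S* equals w_i·(m − c) + w_{i+1}·c, where c is the number of edges of G with exactly one endpoint in S*. -/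
import Mathlib


/-- The split value of a hyperedge `e` with respect to a cut `S`:
`min (|e ∩ S|, |e \ S|)`. -/
def splitVal {W : Type*} [DecidableEq W] (S e : Finset W) : ℕ :=
  min (e ∩ S).card (e \ S).card

/-- The vertex set of the constructed hypergraph: the original vertices `V`
together with `s`-vertices and `t`-vertices (indexed by naturals). -/
abbrev Vtx (V : Type*) := V ⊕ ℕ ⊕ ℕ

/-- The vertex `s_i`. -/
def sV {V : Type*} (i : ℕ) : Vtx V := Sum.inr (Sum.inl i)

/-- The vertex `t_i`. -/
def tV {V : Type*} (i : ℕ) : Vtx V := Sum.inr (Sum.inr i)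

/-- The set `{s_1, …, s_j}`. -/
def sSet (V : Type*) [DecidableEq V] (j : ℕ) : Finset (Vtx V) := (Finset.Icc 1 j).image sV

/-- The set `{t_1, …, t_j}`. -/
def tSet (V : Type*) [DecidableEq V] (j : ℕ) : Finset (Vtx V) := (Finset.Icc 1 j).image tV

/-- The two endpoints of a graph edge, as a `Finset`. -/
def pairFinset {V : Type*} [DecidableEq V] (e : Sym2 V) : Finset V :=
  Sym2.lift ⟨fun x y => ({x, y} : Finset V), fun _ _ => Finset.pair_comm _ _⟩ e

/-- The image `{x, y}` (inside `Vtx V`) of a graph edge `{x, y}`. -/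
def edgeImg {V : Type*} [DecidableEq V] (e : Sym2 V) : Finset (Vtx V) :=
  (pairFinset e).image Sum.inl

/-- The maximum cut value of `G`: the maximum over subsets `U` of the vertex set
of the number of edges with exactly one endpoint in `U`. -/
def maxCut {V : Type*} [Fintype V] [DecidableEq V] (G : SimpleGraph V)
    [DecidableRel G.Adj] : ℕ :=
  Finset.univ.sup fun U : Finset V =>
    (G.edgeFinset.filter (fun e => (pairFinset e ∩ U).card = 1)).card

/-- The hyperedge family built from `G`: the 2-element subsets of the two cliques,
and for each edge `{x,y}` of `G` the hyperedge `{s_1,…,s_i,x,y,t_1,…,t_i}`. -/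
def H2 {V : Type*} [Fintype V] [DecidableEq V] (G : SimpleGraph V) [DecidableRel G.Adj]
    (α i : ℕ) : Finset (Finset (Vtx V)) :=
  (sSet V α).powersetCard 2 ∪ (tSet V α).powersetCard 2 ∪
    G.edgeFinset.image (fun e => sSet V i ∪ edgeImg e ∪ tSet V i)

open Finset

section Aux
set_option linter.unusedSectionVars false
variable {V : Type*} [DecidableEq V]

lemma sV_inj : Function.Injective (sV (V := V)) := by
  intro a b h; simpa [sV] using h
lemma tV_inj : Function.Injective (tV (V := V)) := by
  intro a b h; simpa [tV] using h

lemma sSet_card (j : ℕ) : (sSet V j).card = j := by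
  rw [sSet, card_image_of_injective _ sV_inj]; simp
lemma tSet_card (j : ℕ) : (tSet V j).card = j := by
  rw [tSet, card_image_of_injective _ tV_inj]; simp

lemma sSet_subset {j k : ℕ} (h : j ≤ k) : sSet V j ⊆ sSet V k :=
  image_subset_image (Icc_subset_Icc_right h)
lemma tSet_subset {j k : ℕ} (h : j ≤ k) : tSet V j ⊆ tSet V k :=
  image_subset_image (Icc_subset_Icc_right h)

lemma disj_st {j k : ℕ} : Disjoint (sSet V j) (tSet V k) := by
  rw [disjoint_left]; intro a ha hb
  simp [sSet, tSet, sV, tV] at ha hb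
  obtain ⟨x, _, rfl⟩ := ha; obtain ⟨y, _, h⟩ := hb; simp at h

lemma disj_s_edge {j : ℕ} {e : Sym2 V} : Disjoint (sSet V j) (edgeImg e) := by
  rw [disjoint_left]; intro a ha hb
  simp [sSet, edgeImg, sV] at ha hb
  obtain ⟨x, _, rfl⟩ := ha; obtain ⟨y, _, h⟩ := hb; simp at h

lemma disj_t_edge {j : ℕ} {e : Sym2 V} : Disjoint (tSet V j) (edgeImg e) := by
  rw [disjoint_left]; intro a ha hb
  simp [tSet, edgeImg, tV] at ha hb
  obtain ⟨x, _, rfl⟩ := ha; obtain ⟨y, _, h⟩ := hb; simp at h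

lemma pairFinset_card {e : Sym2 V} (h : ¬ e.IsDiag) : (pairFinset e).card = 2 := by
  induction e using Sym2.inductionOn with
  | hf x y =>
    simp [Sym2.isDiag_iff_proj_eq] at h
    simp [pairFinset, card_pair h]

lemma edgeImg_card {e : Sym2 V} (h : ¬ e.IsDiag) : (edgeImg e).card = 2 := by
  rw [edgeImg, card_image_of_injective _ Sum.inl_injective, pairFinset_card h]

lemma pairFinset_inj : Function.Injective (pairFinset (V := V)) := by
  intro e f h
  induction e using Sym2.inductionOn with
  | hf x y =>
    induction f using Sym2.inductionOn with
    | hf a b =>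
      simp only [pairFinset, Sym2.lift_mk] at h
      have h' : ({x, y} : Set V) = {a, b} := by
        have := congrArg (fun s : Finset V => (s : Set V)) h
        simpa using this
      rcases Set.pair_eq_pair_iff.mp h' with ⟨rfl, rfl⟩ | ⟨rfl, rfl⟩
      · rfl
      · exact Sym2.eq_swap

lemma edgeImg_inj : Function.Injective (edgeImg (V := V)) := by
  intro e f h
  apply pairFinset_inj
  exact Finset.image_injective (f := (Sum.inl : V → Vtx V)) Sum.inl_injective h

lemma filter_isLeft_sSet (j : ℕ) : (sSet V j).filter (fun v => v.isLeft) = ∅ := by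
  rw [filter_eq_empty_iff]; intro a ha
  simp [sSet, sV] at ha; obtain ⟨x, _, rfl⟩ := ha; simp

lemma filter_isLeft_tSet (j : ℕ) : (tSet V j).filter (fun v => v.isLeft) = ∅ := by
  rw [filter_eq_empty_iff]; intro a ha
  simp [tSet, tV] at ha; obtain ⟨x, _, rfl⟩ := ha; simp

lemma filter_isLeft_edgeImg (e : Sym2 V) :
    (edgeImg e).filter (fun v => v.isLeft) = edgeImg e := by
  rw [filter_eq_self]; intro a ha
  simp [edgeImg] at ha; obtain ⟨x, _, rfl⟩ := ha; simp

end Aux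

theorem stmt2 {V : Type*} [Fintype V] [DecidableEq V]
    (G : SimpleGraph V) [DecidableRel G.Adj]
    (m : ℕ) (hm : m = G.edgeFinset.card)
    (i : ℕ) (hi : 1 ≤ i) (α : ℕ) (hα : i + 1 ≤ α)
    (w : ℕ → ℝ) (hw0 : w 0 = 0) (hw1 : w 1 = 1) (hw : ∀ n, 0 ≤ w n)
    (S : Finset (Vtx V))
    (hS : sSet V α ⊆ S) (hT : ∀ v ∈ tSet V α, v ∉ S)
    (c : ℕ)
    (hc : c = (G.edgeFinset.filter
      (fun e => ((edgeImg e).filter (· ∈ S)).card = 1)).card) :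
    ∑ e ∈ H2 G α i, w (splitVal S e) = w i * ((m : ℝ) - c) + w (i + 1) * c := by
  classical
  set F : Sym2 V → Finset (Vtx V) := fun e => sSet V i ∪ edgeImg e ∪ tSet V i with hF
  have hiα : i ≤ α := le_trans (Nat.le_succ i) hα
  have hSi : sSet V i ⊆ S := (sSet_subset hiα).trans hS
  have hTi : ∀ v ∈ tSet V i, v ∉ S := fun v hv => hT v (tSet_subset hiα hv)
  have hTdisj : Disjoint (tSet V i) S := disjoint_left.mpr hTi
  -- card of F e
  have hFcard : ∀ e ∈ G.edgeFinset, (F e).card = 2 * i + 2 := by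
    intro e he
    have hd : ¬ e.IsDiag := by
      rw [SimpleGraph.mem_edgeFinset] at he
      exact G.not_isDiag_of_mem_edgeSet he
    rw [hF]
    rw [card_union_of_disjoint (disjoint_union_left.mpr ⟨disj_st, disj_t_edge.symm⟩),
      card_union_of_disjoint disj_s_edge, sSet_card, tSet_card, edgeImg_card hd]
    ring
  -- split values
  have key : ∀ e ∈ G.edgeFinset, splitVal S (F e)
      = if (edgeImg e ∩ S).card = 1 then i + 1 else i := by
    intro e he
    have hd : ¬ e.IsDiag := by
      rw [SimpleGraph.mem_edgeFinset] at he
      exact G.not_isDiag_of_mem_edgeSet he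
    have hE2 : (edgeImg e).card = 2 := edgeImg_card hd
    have hk2 : (edgeImg e ∩ S).card ≤ 2 := hE2 ▸ card_le_card inter_subset_left
    have h1 : (F e ∩ S).card = i + (edgeImg e ∩ S).card := by
      rw [hF]
      rw [union_inter_distrib_right, union_inter_distrib_right,
        inter_eq_left.mpr hSi, disjoint_iff_inter_eq_empty.mp hTdisj, union_empty,
        card_union_of_disjoint (disj_s_edge.mono_right inter_subset_left), sSet_card]
    have h2 : (F e \ S).card = (2 - (edgeImg e ∩ S).card) + i := by
      rw [hF]
      rw [union_sdiff_distrib, union_sdiff_distrib,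
        sdiff_eq_empty_iff_subset.mpr hSi, empty_union,
        Finset.sdiff_eq_self_iff_disjoint.mpr hTdisj,
        card_union_of_disjoint (disj_t_edge.symm.mono_left sdiff_subset), tSet_card]
      have := card_sdiff_add_card_inter (edgeImg e) S
      omega
    rw [splitVal, h1, h2]
    rcases eq_or_ne (edgeImg e ∩ S).card 1 with h | h
    · rw [h, if_pos rfl, min_def]; split <;> omega
    · rw [if_neg h, min_def]; split <;> omega
  -- injectivity of F
  have hrec : ∀ e : Sym2 V, (F e).filter (fun v => v.isLeft) = edgeImg e := by
    intro e
    rw [hF]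
    simp only
    rw [filter_union, filter_union, filter_isLeft_sSet, filter_isLeft_tSet,
      filter_isLeft_edgeImg, empty_union, union_empty]
  have hFinj : ∀ e ∈ G.edgeFinset, ∀ f ∈ G.edgeFinset, F e = F f → e = f := by
    intro e _ f _ h
    apply edgeImg_inj
    rw [← hrec e, ← hrec f, h]
  -- disjointness of the three parts
  have hd1 : Disjoint ((sSet V α).powersetCard 2) ((tSet V α).powersetCard 2) := by
    rw [disjoint_left]; intro a ha hb
    rw [mem_powersetCard] at ha hb
    have hsub : a ⊆ sSet V α ∩ tSet V α := subset_inter ha.1 hb.1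
    rw [disjoint_iff_inter_eq_empty.mp disj_st] at hsub
    have := card_le_card hsub
    simp [ha.2] at this
  have hd2 : Disjoint ((sSet V α).powersetCard 2 ∪ (tSet V α).powersetCard 2)
      (G.edgeFinset.image F) := by
    rw [disjoint_right]; intro a ha hb
    obtain ⟨e, he, rfl⟩ := mem_image.mp ha
    have hc2 := hFcard e he
    rcases mem_union.mp hb with h | h <;>
      · rw [mem_powersetCard] at h; omega
  have hH2 : H2 G α i = ((sSet V α).powersetCard 2 ∪ (tSet V α).powersetCard 2)
      ∪ G.edgeFinset.image F := rfl
  rw [hH2, sum_union hd2, sum_union hd1]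
  have hs0 : ∑ e ∈ (sSet V α).powersetCard 2, w (splitVal S e) = 0 := by
    apply sum_eq_zero; intro e he
    rw [mem_powersetCard] at he
    have h0 : e \ S = ∅ := sdiff_eq_empty_iff_subset.mpr (he.1.trans hS)
    simp [splitVal, h0, hw0]
  have ht0 : ∑ e ∈ (tSet V α).powersetCard 2, w (splitVal S e) = 0 := by
    apply sum_eq_zero; intro e he
    rw [mem_powersetCard] at he
    have h0 : e ∩ S = ∅ :=
      disjoint_iff_inter_eq_empty.mp ((disjoint_left.mpr hT).mono_left he.1)
    simp [splitVal, h0, hw0]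
  rw [hs0, ht0, sum_image hFinj]
  rw [sum_congr rfl (fun e he => by rw [key e he])]
  rw [← sum_filter_add_sum_filter_not G.edgeFinset (fun e => (edgeImg e ∩ S).card = 1)]
  have e1 : ∑ e ∈ G.edgeFinset.filter (fun e => (edgeImg e ∩ S).card = 1),
      w (if (edgeImg e ∩ S).card = 1 then i + 1 else i)
      = ∑ _e ∈ G.edgeFinset.filter (fun e => (edgeImg e ∩ S).card = 1), w (i + 1) := by
    apply sum_congr rfl; intro e he
    rw [if_pos (mem_filter.mp he).2]
  have e2 : ∑ e ∈ G.edgeFinset.filter (fun e => ¬ (edgeImg e ∩ S).card = 1),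
      w (if (edgeImg e ∩ S).card = 1 then i + 1 else i)
      = ∑ _e ∈ G.edgeFinset.filter (fun e => ¬ (edgeImg e ∩ S).card = 1), w i := by
    apply sum_congr rfl; intro e he
    rw [if_neg (mem_filter.mp he).2]
  rw [e1, e2, sum_const, sum_const]
  have hcc : (G.edgeFinset.filter (fun e => (edgeImg e ∩ S).card = 1)).card = c := by
    simp only [hc, filter_mem_eq_inter]
  have hmc : (G.edgeFinset.filter (fun e => ¬ (edgeImg e ∩ S).card = 1)).card = m - c := by
    have := card_filter_add_card_filter_not (s := G.edgeFinset)
      (p := fun e => (edgeImg e ∩ S).card = 1)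
    omega
  have hcm : c ≤ m := by
    rw [hc, hm]; exact card_filter_le _ _
  rw [hcc, hmc, nsmul_eq_mul, nsmul_eq_mul]
  push_cast [Nat.cast_sub hcm]
  ring
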